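/- Let S be a finite set of points in the Euclidean plane in general position. Then no Voronoi region of any order degenerates to a line segment or a single point: for every subset A ⊆ S, if the Voronoi region V(A) is nonempty then V(A) has nonempty topological interior. -/
import Mathlib


open scoped Classical
open scoped RealInnerProductSpace

noncomputable section

/-- The Euclidean plane. -/
abbrev Plane := EuclideanSpace ℝ (Fin 2)

/-- General position: no three points of `S` are collinear and
no four points of `S` lie on a common circle. -/
def GenPos (S : Finset Plane) : Prop :=
  (∀ T ⊆ S, T.card = 3 → ¬ Collinear ℝ (T : Set Plane)) ∧
  (∀ T ⊆ S, T.card = 4 → ¬ ∃ (o : Plane) (r : ℝ), ∀ p ∈ T, dist p o = r)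

/-- The Voronoi region of `A ⊆ S`: points at least as close to every
point of `A` as to every point of `S \ A`. -/
def VorRegion (S A : Finset Plane) : Set Plane :=
  {p | ∀ x ∈ A, ∀ y ∈ S \ A, dist p x ≤ dist p y}

/-- `fVec S k` : the number of `k`-element subsets `A` of `S` with
nonempty Voronoi region, i.e. the number of regions of the `k`-th
order Voronoi diagram. -/
def fVec (S : Finset Plane) (k : ℕ) : ℕ :=
  ((S.powersetCard k).filter (fun A => (VorRegion S A).Nonempty)).card

/-- `fInfVec S k` : the number of `k`-element subsets `A` of `S` whose
Voronoi region is nonempty and unbounded. -/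
def fInfVec (S : Finset Plane) (k : ℕ) : ℕ :=
  ((S.powersetCard k).filter
    (fun A => (VorRegion S A).Nonempty ∧
      ¬ Bornology.IsBounded (VorRegion S A))).card

/-- `cVec S i` : the number of 3-element subsets `T` of `S` whose
circumscribed circle contains exactly `i` points of `S \ T` strictly
inside (`0` for `i < 0`). -/
def cVec (S : Finset Plane) (i : ℤ) : ℕ :=
  ((S.powersetCard 3).filter (fun T => ∃ (o : Plane) (r : ℝ),
    (∀ p ∈ T, dist p o = r) ∧
    (((S \ T).filter (fun q => dist q o < r)).card : ℤ) = i)).card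

lemma key_tied (p v x y : Plane) (htie : dist p x = dist p y)
    (hv : ⟪v, y - x⟫ < 0) (ε : ℝ) (hε : 0 < ε) :
    dist (p + ε • v) x < dist (p + ε • v) y := by
  have ha : p + ε • v - x = (p - x) + ε • v := by abel
  have hb : p + ε • v - y = (p - y) + ε • v := by abel
  have hpx : dist p x = ‖p - x‖ := dist_eq_norm _ _
  have hpy : dist p y = ‖p - y‖ := dist_eq_norm _ _
  refine lt_of_pow_lt_pow_left₀ 2 dist_nonneg ?_
  rw [dist_eq_norm, dist_eq_norm, ha, hb, norm_add_sq_real, norm_add_sq_real]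
  have hinner : ⟪p - x, ε • v⟫ - ⟪p - y, ε • v⟫ = ε * ⟪v, y - x⟫ := by
    rw [real_inner_smul_right, real_inner_smul_right, ← mul_sub, ← inner_sub_left]
    have : p - x - (p - y) = y - x := by abel
    rw [this, real_inner_comm]
  have hnorm : ‖p - x‖ = ‖p - y‖ := by rw [← hpx, ← hpy, htie]
  have hlt : ε * ⟪v, y - x⟫ < 0 := mul_neg_of_pos_of_neg hε hv
  rw [hnorm]
  linarith

lemma inner_circ (p a b : Plane) (r : ℝ) (hr : 0 < r)
    (ha : ‖p - a‖ = r) (hb : ‖p - b‖ = r) (hab : a ≠ b) :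
    ⟪p - a, p - b⟫ < r ^ 2 := by
  have h := inner_lt_norm_mul_iff_real (F := Plane) (x := p - a) (y := p - b)
  rw [ha, hb] at h
  have hne : r • (p - a) ≠ r • (p - b) := by
    intro hcon
    have h2 := smul_right_injective Plane hr.ne' hcon
    exact hab (sub_right_injective h2)
  have := h.2 hne
  nlinarith

set_option maxHeartbeats 1000000 in
/-- Nonempty Voronoi regions do not degenerate: for `S` in general
position, every nonempty Voronoi region has nonempty interior. -/
theorem vorRegion_nondegenerate (S : Finset Plane) (hgp : GenPos S)
    (A : Finset Plane) (hA : A ⊆ S) (hne : (VorRegion S A).Nonempty) :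
    (interior (VorRegion S A)).Nonempty := by
  obtain ⟨p, hp⟩ := hne
  have hp' : ∀ x ∈ A, ∀ y ∈ S \ A, dist p x ≤ dist p y := hp
  have same : ∀ x ∈ A, ∀ y ∈ S \ A, dist p x = dist p y →
      ∀ x' ∈ A, ∀ y' ∈ S \ A, dist p x' = dist p y' → dist p x = dist p x' := by
    intro x hx y hy hxy x' hx' y' hy' hxy'
    have h1 : dist p x ≤ dist p y' := hp' x hx y' hy'
    have h2 : dist p x' ≤ dist p y := hp' x' hx' y hy
    rw [← hxy'] at h1
    rw [← hxy] at h2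
    exact le_antisymm h1 h2
  obtain ⟨v, hv⟩ : ∃ v : Plane, ∀ x ∈ A, ∀ y ∈ S \ A,
      dist p x = dist p y → ⟪v, y - x⟫ < 0 := by
    by_cases htie : ∃ x ∈ A, ∃ y ∈ S \ A, dist p x = dist p y
    · obtain ⟨x0, hx0, y0, hy0, h0⟩ := htie
      have hy0A : y0 ∉ A := (Finset.mem_sdiff.1 hy0).2
      have hy0S : y0 ∈ S := (Finset.mem_sdiff.1 hy0).1
      have hxy0 : x0 ≠ y0 := fun h => hy0A (h ▸ hx0)
      have hrpos : 0 < dist p x0 := by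
        rcases lt_or_eq_of_le (dist_nonneg : (0:ℝ) ≤ dist p x0) with h | h
        · exact h
        · exfalso
          have hx0p : p = x0 := dist_eq_zero.1 h.symm
          have hy0p : p = y0 := dist_eq_zero.1 (by rw [← h0, ← h])
          exact hxy0 (hx0p ▸ hy0p)
      by_cases hX2 : ∃ x1 ∈ A, dist p x1 = dist p x0 ∧ x1 ≠ x0
      · by_cases hY2 : ∃ y1 ∈ S \ A, dist p y1 = dist p x0 ∧ y1 ≠ y0
        · exfalso
          obtain ⟨x1, hx1, hx1r, hx1ne⟩ := hX2
          obtain ⟨y1, hy1, hy1r, hy1ne⟩ := hY2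
          have hy1A : y1 ∉ A := (Finset.mem_sdiff.1 hy1).2
          have hy1S : y1 ∈ S := (Finset.mem_sdiff.1 hy1).1
          have d1 : x0 ≠ y1 := fun h => hy1A (h ▸ hx0)
          have d2 : x1 ≠ y0 := fun h => hy0A (h ▸ hx1)
          have d3 : x1 ≠ y1 := fun h => hy1A (h ▸ hx1)
          refine hgp.2 {x0, x1, y0, y1} ?_ ?_ ⟨p, dist p x0, ?_⟩
          · intro z hz
            simp only [Finset.mem_insert, Finset.mem_singleton] at hz
            rcases hz with rfl | rfl | rfl | rfl
            · exact hA hx0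
            · exact hA hx1
            · exact hy0S
            · exact hy1S
          · rw [Finset.card_insert_of_notMem (by simp [hx1ne.symm, hxy0, d1]),
              Finset.card_insert_of_notMem (by simp [d2, d3]),
              Finset.card_insert_of_notMem (by simp [hy1ne.symm]),
              Finset.card_singleton]
          · intro z hz
            simp only [Finset.mem_insert, Finset.mem_singleton] at hz
            rcases hz with rfl | rfl | rfl | rfl
            · exact dist_comm z p
            · rw [dist_comm]; exact hx1r
            · rw [dist_comm]; exact h0.symm
            · rw [dist_comm]; exact hy1r
        · -- unique tied y: v := p - y0
          refine ⟨p - y0, ?_⟩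
          intro x hx y hy hxy
          have hxr : dist p x = dist p x0 := same x hx y hy hxy x0 hx0 y0 hy0 h0
          have hyr : dist p y = dist p x0 := by rw [← hxy]; exact hxr
          have hyy0 : y = y0 := by
            by_contra h
            exact hY2 ⟨y, hy, hyr, h⟩
          subst hyy0
          have hxney : x ≠ y := fun h => (Finset.mem_sdiff.1 hy).2 (h ▸ hx)
          have hcross : ⟪p - y, p - x⟫ < dist p x0 ^ 2 :=
            inner_circ p y x (dist p x0) hrpos
              (by rw [← dist_eq_norm]; exact hyr)
              (by rw [← dist_eq_norm]; exact hxr) hxney.symm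
          have hself : ⟪p - y, p - y⟫ = dist p x0 ^ 2 := by
            rw [real_inner_self_eq_norm_sq, ← dist_eq_norm, hyr]
          have hrw : y - x = (p - x) - (p - y) := by abel
          rw [hrw, inner_sub_right]
          linarith
      · -- unique tied x: v := x0 - p
        refine ⟨x0 - p, ?_⟩
        intro x hx y hy hxy
        have hxr : dist p x = dist p x0 := same x hx y hy hxy x0 hx0 y0 hy0 h0
        have hxx0 : x = x0 := by
          by_contra h
          exact hX2 ⟨x, hx, hxr, h⟩
        subst hxx0
        have hyr : dist p y = dist p x := by rw [← hxy]
        have hxney : x ≠ y := fun h => (Finset.mem_sdiff.1 hy).2 (h ▸ hx)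
        have hcross : ⟪p - x, p - y⟫ < dist p x ^ 2 :=
          inner_circ p x y (dist p x) hrpos
            (by rw [← dist_eq_norm])
            (by rw [← dist_eq_norm]; exact hyr) hxney
        have hself : ⟪p - x, p - x⟫ = dist p x ^ 2 := by
          rw [real_inner_self_eq_norm_sq, ← dist_eq_norm]
        have hrw1 : x - p = -(p - x) := by abel
        have hrw2 : y - x = (p - x) - (p - y) := by abel
        rw [hrw1, hrw2, inner_neg_left, inner_sub_right]
        linarith
    · exact ⟨0, fun x hx y hy hxy => absurd ⟨x, hx, y, hy, hxy⟩ htie⟩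
  have hcont : Continuous fun ε : ℝ => p + ε • v := by fun_prop
  have hev : ∀ᶠ ε : ℝ in nhdsWithin 0 (Set.Ioi 0),
      ∀ x ∈ A, ∀ y ∈ S \ A, dist (p + ε • v) x < dist (p + ε • v) y := by
    rw [Filter.eventually_all_finset]
    intro x hx
    rw [Filter.eventually_all_finset]
    intro y hy
    rcases eq_or_lt_of_le (hp' x hx y hy) with heq | hlt
    · exact eventually_nhdsWithin_of_forall
        (fun ε hε => key_tied p v x y heq (hv x hx y hy heq) ε hε)
    · have hcx : Continuous fun ε : ℝ => dist (p + ε • v) x :=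
        hcont.dist continuous_const
      have hcy : Continuous fun ε : ℝ => dist (p + ε • v) y :=
        hcont.dist continuous_const
      have h0 : (0:ℝ) ∈ {ε : ℝ | dist (p + ε • v) x < dist (p + ε • v) y} := by
        show dist (p + (0:ℝ) • v) x < dist (p + (0:ℝ) • v) y
        rw [zero_smul, add_zero]
        exact hlt
      have hopen := (isOpen_lt hcx hcy).mem_nhds h0
      exact Filter.Eventually.filter_mono nhdsWithin_le_nhds hopen
  obtain ⟨ε, hε⟩ := hev.exists
  have hW : IsOpen {z : Plane | ∀ x ∈ A, ∀ y ∈ S \ A, dist z x < dist z y} := by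
    have heq : {z : Plane | ∀ x ∈ A, ∀ y ∈ S \ A, dist z x < dist z y}
        = ⋂ x ∈ A, ⋂ y ∈ (S \ A), {z | dist z x < dist z y} := by
      ext z; simp only [Set.mem_setOf_eq, Set.mem_iInter]
    rw [heq]
    refine isOpen_biInter_finset fun x hx => isOpen_biInter_finset fun y hy => ?_
    exact isOpen_lt (continuous_id.dist continuous_const)
      (continuous_id.dist continuous_const)
  refine ⟨p + ε • v, interior_maximal ?_ hW hε⟩
  intro z hz x hx y hy
  exact (hz x hx y hy).le
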